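/- For any a ∈ A_{n-1} and any ε > 0, there exists a' ∈ A_n with |I₁(a') - I₁(a)| < ε; consequently inf_{A_n} I₁ ≤ inf_{A_{n-1}} I₁. -/

import Mathlib

open MeasureTheory Set Filter Topology

private noncomputable def gTerm (μ ψ μinv : ℝ → ℝ) (q M : ℝ) : ℝ :=
  q * (Real.log q + μinv (M / q) * μ (μinv (M / q)) - ψ (μinv (M / q)))

private lemma continuous_Iic_primitive {f : ℝ → ℝ} (hf : Integrable f) :
    Continuous fun x => ∫ t in Iic x, f t := by
  have h := hf.continuous_primitive 0
  refine Continuous.congr (f := fun x => (∫ t in Iic (0:ℝ), f t) + ∫ s in (0:ℝ)..x, f s)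
    (continuous_const.add h) fun x => ?_
  have := intervalIntegral.integral_Iic_sub_Iic (hf.integrableOn (s := Iic (0:ℝ)))
    (hf.integrableOn (s := Iic x))
  linarith

private lemma gTerm_tendsto {μ ψ μinv : ℝ → ℝ} (hμc : Continuous μ) (hψc : Continuous ψ)
    (hinvc : Continuous μinv) {l : Filter ℝ} {u v : ℝ → ℝ} {q M : ℝ} (hq : q ≠ 0)
    (hu : Tendsto u l (𝓝 q)) (hv : Tendsto v l (𝓝 M)) :
    Tendsto (fun t => gTerm μ ψ μinv (u t) (v t)) l (𝓝 (gTerm μ ψ μinv q M)) := by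
  have hθ : Tendsto (fun t => μinv (v t / u t)) l (𝓝 (μinv (M / q))) :=
    (hinvc.tendsto _).comp (hv.div hu hq)
  simp only [gTerm]
  exact hu.mul (((hu.log hq).add (hθ.mul ((hμc.tendsto _).comp hθ))).sub
    ((hψc.tendsto _).comp hθ))

private lemma gTerm_tendsto_zero {μ ψ μinv : ℝ → ℝ} (hμc : Continuous μ) (hψc : Continuous ψ)
    (hinvc : Continuous μinv) {l : Filter ℝ} {u v : ℝ → ℝ} {c : ℝ}
    (hu : Tendsto u l (𝓝 0)) (hr : Tendsto (fun t => v t / u t) l (𝓝 c)) :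
    Tendsto (fun t => gTerm μ ψ μinv (u t) (v t)) l (𝓝 0) := by
  have hθ : Tendsto (fun t => μinv (v t / u t)) l (𝓝 (μinv c)) := (hinvc.tendsto _).comp hr
  have h1 : Tendsto (fun t => u t * Real.log (u t)) l (𝓝 0) := by
    have := (Real.continuous_mul_log.tendsto 0).comp hu
    simpa [Function.comp_def] using this
  have h2 : Tendsto (fun t => u t *
      (μinv (v t / u t) * μ (μinv (v t / u t)) - ψ (μinv (v t / u t)))) l (𝓝 0) := by
    have := hu.mul ((hθ.mul ((hμc.tendsto _).comp hθ)).sub ((hψc.tendsto _).comp hθ))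
    simpa using this
  have h3 := h1.add h2
  rw [add_zero] at h3
  refine h3.congr fun t => ?_
  simp only [gTerm]; ring

/-- Inserting an extra cut-point close to an existing one changes `I₁` by arbitrarily
little: for any `a ∈ A_n` (with `n ≥ 1`) and `ε > 0` there is `a' ∈ A_{n+1}` with
`|I₁(a') - I₁(a)| < ε`; consequently `inf_{A_{n+1}} I₁ ≤ inf_{A_n} I₁`. -/
theorem smml_insert_cutpoint_approx
    (X : Set ℝ) (hX : IsOpen X)
    (r : ℝ → ℝ) (hr : Continuous r) (hrpos : ∀ x, 0 < r x)
    (hint : Integrable r) (hnorm : ∫ x, r x = 1)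
    (hint1 : Integrable (fun x => x * r x))
    (ψ μ dμ : ℝ → ℝ) (hψ : ∀ θ, HasDerivAt ψ (μ θ) θ)
    (hμ : ∀ θ, HasDerivAt μ (dμ θ) θ) (hdμcont : Continuous dμ) (hdμpos : ∀ θ, 0 < dμ θ)
    (μinv : ℝ → ℝ) (hinvl : ∀ θ, μinv (μ θ) = θ) (hinvr : ∀ y, μ (μinv y) = y)
    (C : ℝ)
    (R : ℝ → ℝ) (hR : ∀ x, R x = ∫ t in Iic x, r t)
    (Q : ℕ → (ℕ → ℝ) → ℕ → ℝ)
    (hQ : ∀ m b i, Q m b i =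
      (if i = m then 1 else R (b (i + 1))) - (if i = 0 then 0 else R (b i)))
    (M : ℕ → (ℕ → ℝ) → ℕ → ℝ)
    (hM : ∀ m b i, M m b i =
      (if i = m then ∫ t, t * r t else ∫ t in Iic (b (i + 1)), t * r t) -
      (if i = 0 then 0 else ∫ t in Iic (b i), t * r t))
    (TH : ℕ → (ℕ → ℝ) → ℕ → ℝ) (hTH : ∀ m b i, TH m b i = μinv (M m b i / Q m b i))
    (I1 : ℕ → (ℕ → ℝ) → ℝ)
    (hI1 : ∀ m b, I1 m b = C - ∑ i ∈ Finset.range (m + 1),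
      Q m b i * (Real.log (Q m b i) + TH m b i * μ (TH m b i) - ψ (TH m b i)))
    (A : ℕ → Set (ℕ → ℝ))
    (hA : ∀ m, A m = {b | (∀ i, 1 ≤ i → i ≤ m → b i ∈ X) ∧
      ∀ i j, 1 ≤ i → i < j → j ≤ m → b i < b j})
    (m : ℕ) (hm : 1 ≤ m) :
    (∀ a ∈ A m, ∀ ε > (0 : ℝ), ∃ a' ∈ A (m + 1), |I1 (m + 1) a' - I1 m a| < ε) ∧
    (⨅ a' ∈ A (m + 1), (I1 (m + 1) a' : EReal)) ≤ ⨅ a ∈ A m, (I1 m a : EReal) := by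
  -- basic continuity facts
  have hRcont : Continuous R := (continuous_Iic_primitive hint).congr fun x => (hR x).symm
  have hLcont : Continuous fun x => ∫ t in Iic x, t * r t := continuous_Iic_primitive hint1
  have hμcont : Continuous μ := continuous_iff_continuousAt.2 fun θ => (hμ θ).continuousAt
  have hψcont : Continuous ψ := continuous_iff_continuousAt.2 fun θ => (hψ θ).continuousAt
  have hμsm : StrictMono μ := strictMono_of_deriv_pos fun θ => by
    rw [(hμ θ).deriv]; exact hdμpos θ
  have hμsurj : Function.Surjective μ := fun y => ⟨μinv y, hinvr y⟩
  have hμinv_cont : Continuous μinv := by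
    have heq : ∀ y, (StrictMono.orderIsoOfSurjective μ hμsm hμsurj).symm y = μinv y := by
      intro y
      apply hμsm.injective
      rw [hinvr]
      exact StrictMono.orderIsoOfSurjective_self_symm_apply μ hμsm hμsurj y
    exact ((StrictMono.orderIsoOfSurjective μ hμsm hμsurj).symm.continuous).congr heq
  -- facts about R
  have hRdiff : ∀ x y : ℝ, R y - R x = ∫ t in x..y, r t := fun x y => by
    rw [hR, hR]
    exact intervalIntegral.integral_Iic_sub_Iic hint.integrableOn hint.integrableOn
  have hRlt : ∀ x y : ℝ, x < y → R x < R y := fun x y hxy => by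
    have h1 := intervalIntegral.intervalIntegral_pos_of_pos (f := r)
      hint.intervalIntegrable hrpos hxy
    have h2 := hRdiff x y
    linarith
  have hRone : ∀ x, R x < 1 := by
    intro x
    have h1 : R x + ∫ t in Ioi x, r t = 1 := by
      rw [hR, ← hnorm]
      exact intervalIntegral.integral_Iic_add_Ioi hint.integrableOn hint.integrableOn
    have h2 : 0 < ∫ t in Ioi x, r t := by
      rw [setIntegral_pos_iff_support_of_nonneg_ae
        (ae_of_all _ fun y => (hrpos y).le) hint.integrableOn]
      have hsupp : Function.support r = univ := eq_univ_of_forall fun y => (hrpos y).ne'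
      rw [hsupp, univ_inter, Real.volume_Ioi]
      exact ENNReal.zero_lt_top
    linarith
  have hLdiff : ∀ x y : ℝ, (∫ t in Iic y, t * r t) - (∫ t in Iic x, t * r t)
      = ∫ t in x..y, t * r t := fun x y =>
    intervalIntegral.integral_Iic_sub_Iic hint1.integrableOn hint1.integrableOn
  -- The main approximation statement
  have main : ∀ a ∈ A m, ∀ ε > (0 : ℝ), ∃ a' ∈ A (m + 1), |I1 (m + 1) a' - I1 m a| < ε := by
    intro a ha ε hε
    rw [hA] at ha
    obtain ⟨haX, hamono⟩ := ha
    set b := a m with hb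
    have hbX : b ∈ X := haX m hm le_rfl
    obtain ⟨δ, hδ, hball⟩ := Metric.isOpen_iff.1 hX b hbX
    set a' : ℝ → ℕ → ℝ := fun t i => if i ≤ m then a i else b + t with ha'
    have ha'eq : ∀ t i, i ≤ m → a' t i = a i := fun t i h => if_pos h
    have ha'top : ∀ t, a' t (m+1) = b + t := fun t => if_neg (by omega)
    -- low-index masses agree
    have hQlow : ∀ t, ∀ i < m, Q (m+1) (a' t) i = Q m a i := by
      intro t i hi
      rw [hQ, hQ, ha'eq t (i+1) (by omega), ha'eq t i (by omega)]
      have h1 : i ≠ m + 1 := by omega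
      have h2 : i ≠ m := by omega
      simp [h1, h2]
    have hMlow : ∀ t, ∀ i < m, M (m+1) (a' t) i = M m a i := by
      intro t i hi
      rw [hM, hM, ha'eq t (i+1) (by omega), ha'eq t i (by omega)]
      have h1 : i ≠ m + 1 := by omega
      have h2 : i ≠ m := by omega
      simp [h1, h2]
    -- explicit formulas for the boundary terms
    have hm0 : m ≠ 0 := by omega
    have hQmid : ∀ t, Q (m+1) (a' t) m = R (b + t) - R b := by
      intro t
      rw [hQ, ha'top, ha'eq t m le_rfl, ← hb]
      simp [hm0, Nat.ne_of_lt (Nat.lt_succ_self m)]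
    have hMmid : ∀ t, M (m+1) (a' t) m
        = (∫ s in Iic (b + t), s * r s) - ∫ s in Iic b, s * r s := by
      intro t
      rw [hM, ha'top, ha'eq t m le_rfl, ← hb]
      simp [hm0, Nat.ne_of_lt (Nat.lt_succ_self m)]
    have hQtop : ∀ t, Q (m+1) (a' t) (m+1) = 1 - R (b + t) := by
      intro t
      rw [hQ, ha'top]
      simp
    have hMtop : ∀ t, M (m+1) (a' t) (m+1)
        = (∫ s, s * r s) - ∫ s in Iic (b + t), s * r s := by
      intro t
      rw [hM, ha'top]
      simp
    have hQm : Q m a m = 1 - R b := by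
      rw [hQ, ← hb]; simp [hm0]
    have hMm : M m a m = (∫ s, s * r s) - ∫ s in Iic b, s * r s := by
      rw [hM, ← hb]; simp [hm0]
    -- decomposition of I1
    have hI1a : I1 m a = C - ((∑ i ∈ Finset.range m,
        Q m a i * (Real.log (Q m a i) + TH m a i * μ (TH m a i) - ψ (TH m a i))) +
        gTerm μ ψ μinv (1 - R b) ((∫ s, s * r s) - ∫ s in Iic b, s * r s)) := by
      rw [hI1, Finset.sum_range_succ]
      rw [hTH, hQm, hMm]
      simp only [gTerm]
    have hI1new : ∀ t, I1 (m+1) (a' t) = C - ((∑ i ∈ Finset.range m,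
        Q m a i * (Real.log (Q m a i) + TH m a i * μ (TH m a i) - ψ (TH m a i))) +
        gTerm μ ψ μinv (R (b + t) - R b)
          ((∫ s in Iic (b + t), s * r s) - ∫ s in Iic b, s * r s) +
        gTerm μ ψ μinv (1 - R (b + t))
          ((∫ s, s * r s) - ∫ s in Iic (b + t), s * r s)) := by
      intro t
      rw [hI1]
      rw [Finset.sum_range_succ, Finset.sum_range_succ]
      have hlowsum : (∑ i ∈ Finset.range m, Q (m+1) (a' t) i *
          (Real.log (Q (m+1) (a' t) i) + TH (m+1) (a' t) i * μ (TH (m+1) (a' t) i)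
            - ψ (TH (m+1) (a' t) i)))
          = ∑ i ∈ Finset.range m,
            Q m a i * (Real.log (Q m a i) + TH m a i * μ (TH m a i) - ψ (TH m a i)) := by
        refine Finset.sum_congr rfl fun i hi => ?_
        have hi' := Finset.mem_range.1 hi
        rw [hTH, hTH, hQlow t i hi', hMlow t i hi']
      rw [hlowsum, hTH, hTH, hQmid, hMmid, hQtop, hMtop]
      simp only [gTerm]
    -- convergence of the middle term to 0
    have htplus : Tendsto (fun t : ℝ => b + t) (𝓝[>] (0:ℝ)) (𝓝 b) := by
      have h0 : Tendsto (fun t : ℝ => b + t) (𝓝 (0:ℝ)) (𝓝 (b + 0)) :=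
        tendsto_const_nhds.add tendsto_id
      rw [add_zero] at h0
      exact h0.mono_left nhdsWithin_le_nhds
    have hqmid : Tendsto (fun t : ℝ => R (b + t) - R b) (𝓝[>] (0:ℝ)) (𝓝 0) := by
      have h0 : Tendsto (fun t : ℝ => R (b + t) - R b) (𝓝[>] (0:ℝ)) (𝓝 (R b - R b)) :=
        ((hRcont.tendsto b).comp htplus).sub tendsto_const_nhds
      rw [sub_self] at h0
      exact h0
    have hratio : Tendsto (fun t : ℝ =>
        ((∫ s in Iic (b + t), s * r s) - ∫ s in Iic b, s * r s) / (R (b + t) - R b))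
        (𝓝[>] (0:ℝ)) (𝓝 b) := by
      have hbound : ∀ t : ℝ, 0 < t →
          b ≤ ((∫ s in Iic (b + t), s * r s) - ∫ s in Iic b, s * r s) / (R (b + t) - R b) ∧
          ((∫ s in Iic (b + t), s * r s) - ∫ s in Iic b, s * r s) / (R (b + t) - R b)
            ≤ b + t := by
        intro t ht
        have hlt : b < b + t := by linarith
        have hq : 0 < R (b + t) - R b := by have := hRlt b (b + t) hlt; linarith
        have hqr : R (b + t) - R b = ∫ s in b..(b+t), r s := hRdiff b (b+t)
        have hMr : (∫ s in Iic (b + t), s * r s) - ∫ s in Iic b, s * r s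
            = ∫ s in b..(b+t), s * r s := hLdiff b (b+t)
        have hlow : b * (R (b + t) - R b) ≤ ∫ s in b..(b+t), s * r s := by
          rw [hqr, ← intervalIntegral.integral_const_mul]
          refine intervalIntegral.integral_mono_on hlt.le
            (hint.intervalIntegrable.const_mul b)
            hint1.intervalIntegrable fun s hs => ?_
          exact mul_le_mul_of_nonneg_right hs.1 (hrpos s).le
        have hhigh : (∫ s in b..(b+t), s * r s) ≤ (b + t) * (R (b + t) - R b) := by
          rw [hqr, ← intervalIntegral.integral_const_mul]
          refine intervalIntegral.integral_mono_on hlt.le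
            hint1.intervalIntegrable
            (hint.intervalIntegrable.const_mul (b+t)) fun s hs => ?_
          exact mul_le_mul_of_nonneg_right hs.2 (hrpos s).le
        constructor
        · rw [hMr, le_div_iff₀ hq]; exact hlow
        · rw [hMr, div_le_iff₀ hq]; exact hhigh
      refine tendsto_of_tendsto_of_tendsto_of_le_of_le' tendsto_const_nhds htplus ?_ ?_
      · filter_upwards [self_mem_nhdsWithin] with t ht
        exact (hbound t ht).1
      · filter_upwards [self_mem_nhdsWithin] with t ht
        exact (hbound t ht).2
    have hW : Tendsto (fun t : ℝ => gTerm μ ψ μinv (R (b + t) - R b)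
        ((∫ s in Iic (b + t), s * r s) - ∫ s in Iic b, s * r s)) (𝓝[>] (0:ℝ)) (𝓝 0) :=
      gTerm_tendsto_zero hμcont hψcont hμinv_cont hqmid hratio
    have hV : Tendsto (fun t : ℝ => gTerm μ ψ μinv (1 - R (b + t))
        ((∫ s, s * r s) - ∫ s in Iic (b + t), s * r s)) (𝓝[>] (0:ℝ))
        (𝓝 (gTerm μ ψ μinv (1 - R b) ((∫ s, s * r s) - ∫ s in Iic b, s * r s))) := by
      refine gTerm_tendsto hμcont hψcont hμinv_cont ?_ ?_ ?_
      · have := hRone b; intro h; rw [sub_eq_zero] at h; exact absurd h.symm (by linarith)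
      · exact tendsto_const_nhds.sub ((hRcont.tendsto b).comp htplus)
      · exact tendsto_const_nhds.sub ((hLcont.tendsto b).comp htplus)
    have hF : Tendsto (fun t : ℝ => I1 (m+1) (a' t)) (𝓝[>] (0:ℝ)) (𝓝 (I1 m a)) := by
      have hcomb := tendsto_const_nhds (x := C) (f := 𝓝[>] (0:ℝ)) |>.sub
        (((tendsto_const_nhds (x := ∑ i ∈ Finset.range m,
          Q m a i * (Real.log (Q m a i) + TH m a i * μ (TH m a i) - ψ (TH m a i)))
          (f := 𝓝[>] (0:ℝ))).add hW).add hV)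
      rw [add_zero] at hcomb
      rw [hI1a]
      exact hcomb.congr fun t => (hI1new t).symm
    -- extract a suitable t
    have hev1 : ∀ᶠ t in 𝓝[>] (0:ℝ), |I1 (m+1) (a' t) - I1 m a| < ε := by
      have := hF (Metric.ball_mem_nhds (I1 m a) hε)
      filter_upwards [this] with t ht
      simpa [Real.dist_eq] using ht
    have hev2 : ∀ᶠ t in 𝓝[>] (0:ℝ), t ∈ Ioo (0:ℝ) δ :=
      Ioo_mem_nhdsGT_of_mem ⟨le_refl 0, hδ⟩
    obtain ⟨t, ht1, ht2⟩ := (hev1.and hev2).exists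
    refine ⟨a' t, ?_, ht1⟩
    rw [hA]
    constructor
    · intro i hi1 hi2
      by_cases h : i ≤ m
      · rw [ha'eq t i h]; exact haX i hi1 h
      · have : i = m + 1 := by omega
        rw [this, ha'top]
        apply hball
        rw [Metric.mem_ball, Real.dist_eq]
        have : b + t - b = t := by ring
        rw [this, abs_of_pos ht2.1]
        exact ht2.2
    · intro i j hi1 hij hj
      by_cases h : j ≤ m
      · rw [ha'eq t i (by omega), ha'eq t j h]
        exact hamono i j hi1 hij h
      · have hj' : j = m + 1 := by omega
        have him : i ≤ m := by omega
        rw [ha'eq t i him, hj', ha'top]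
        have : a i ≤ b := by
          rcases eq_or_lt_of_le him with h' | h'
          · rw [h']
          · exact (hamono i m hi1 h' le_rfl).le
        linarith [ht2.1]
  refine ⟨main, ?_⟩
  refine le_iInf₂ fun a ha => ?_
  refine le_of_forall_gt_imp_ge_of_dense fun c hc => ?_
  obtain ⟨x, hx1, hx2⟩ := EReal.lt_iff_exists_real_btwn.1 hc
  have hx1' : I1 m a < x := by exact_mod_cast hx1
  obtain ⟨a', ha', hlt⟩ := main a ha (x - I1 m a) (by linarith)
  have hlt' : I1 (m+1) a' < x := by
    have := abs_lt.1 hlt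
    linarith [this.2]
  calc (⨅ a' ∈ A (m + 1), (I1 (m + 1) a' : EReal)) ≤ (I1 (m+1) a' : EReal) :=
        iInf₂_le a' ha'
    _ ≤ (x : EReal) := by exact_mod_cast hlt'.le
    _ ≤ c := hx2.le
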